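/- Let G be a subgroup of S₂₄ that is transitive and contains a subgroup isomorphic to S₁₂ embedded diagonally on the two blocks {1,...,12} and {13,...,24} (i.e. the image of the map f with f(σ)(i) = σ(i) for i ≤ 12 and f(σ)(i) = σ(i-12)+12 for i > 12), and a subgroup H₂ that is a conjugate in S₂₄ of the triple-diagonal embedding of S₈ on the blocks {1,...,8}, {9,...,16}, {17,...,24}. Then G preserves no nontrivial partition of {1,...,24}, i.e. G is primitive. -/

import Mathlib

open Equiv

/-- The diagonal embedding of `S₁₂` into `S₂₄` acting on the two blocks
`{0,...,11}` and `{12,...,23}`. -/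
noncomputable def fEmb (σ : Equiv.Perm (Fin 12)) : Equiv.Perm (Fin 24) :=
  Equiv.permCongr (finSumFinEquiv : Fin 12 ⊕ Fin 12 ≃ Fin 24) (Equiv.Perm.sumCongr σ σ)

/-- The triple-diagonal embedding of `S₈` into `S₂₄` acting on the three blocks
`{0,...,7}`, `{8,...,15}`, `{16,...,23}`. -/
noncomputable def gEmb (σ : Equiv.Perm (Fin 8)) : Equiv.Perm (Fin 24) :=
  Equiv.permCongr
    (((Equiv.sumCongr (finSumFinEquiv : Fin 8 ⊕ Fin 8 ≃ Fin 16) (Equiv.refl (Fin 8))).trans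
        (finSumFinEquiv : Fin 16 ⊕ Fin 8 ≃ Fin 24)))
    (Equiv.Perm.sumCongr (Equiv.Perm.sumCongr σ σ) σ)


theorem perm_apply_inv_self' {α : Type*} (f : Perm α) (x : α) : f (f⁻¹ x) = x :=
  f.apply_symm_apply x
theorem perm_inv_apply_self' {α : Type*} (f : Perm α) (x : α) : f⁻¹ (f x) = x :=
  f.symm_apply_apply x

def F12 : Fin 12 ⊕ Fin 12 ≃ Fin 24 := finSumFinEquiv
def eL (i : Fin 12) : Fin 24 := F12 (Sum.inl i)
def eR (i : Fin 12) : Fin 24 := F12 (Sum.inr i)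

lemma fEmb_eL (σ : Perm (Fin 12)) (i : Fin 12) : fEmb σ (eL i) = eL (σ i) := by
  simp [fEmb, eL, F12, Equiv.permCongr_apply]
lemma fEmb_eR (σ : Perm (Fin 12)) (i : Fin 12) : fEmb σ (eR i) = eR (σ i) := by
  simp [fEmb, eR, F12, Equiv.permCongr_apply]

def E24 : (Fin 8 ⊕ Fin 8) ⊕ Fin 8 ≃ Fin 24 :=
  (Equiv.sumCongr (finSumFinEquiv : Fin 8 ⊕ Fin 8 ≃ Fin 16) (Equiv.refl (Fin 8))).trans
    (finSumFinEquiv : Fin 16 ⊕ Fin 8 ≃ Fin 24)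
def pt0 (p : Fin 8) : Fin 24 := E24 (Sum.inl (Sum.inl p))
def pt1 (p : Fin 8) : Fin 24 := E24 (Sum.inl (Sum.inr p))
def pt2 (p : Fin 8) : Fin 24 := E24 (Sum.inr p)

lemma gEmb_pt0 (σ : Perm (Fin 8)) (p : Fin 8) : gEmb σ (pt0 p) = pt0 (σ p) := by
  simp [gEmb, pt0, E24, Equiv.permCongr_apply]
lemma gEmb_pt1 (σ : Perm (Fin 8)) (p : Fin 8) : gEmb σ (pt1 p) = pt1 (σ p) := by
  simp [gEmb, pt1, E24, Equiv.permCongr_apply]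
lemma gEmb_pt2 (σ : Perm (Fin 8)) (p : Fin 8) : gEmb σ (pt2 p) = pt2 (σ p) := by
  simp [gEmb, pt2, E24, Equiv.permCongr_apply]

lemma eL_inj {i j : Fin 12} (h : eL i = eL j) : i = j := by
  simpa [eL, F12] using h
lemma eR_inj {i j : Fin 12} (h : eR i = eR j) : i = j := by
  simpa [eR, F12] using h
lemma eL_ne_eR (i j : Fin 12) : eL i ≠ eR j := by
  simp [eL, eR, F12]
lemma eLR_surj (x : Fin 24) : (∃ i, x = eL i) ∨ (∃ i, x = eR i) := by
  rcases h : F12.symm x with i | i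
  · exact Or.inl ⟨i, by rw [eL, ← h, Equiv.apply_symm_apply]⟩
  · exact Or.inr ⟨i, by rw [eR, ← h, Equiv.apply_symm_apply]⟩

lemma pt0_inj {p q : Fin 8} (h : pt0 p = pt0 q) : p = q := by simpa [pt0, E24] using h
lemma pt1_inj {p q : Fin 8} (h : pt1 p = pt1 q) : p = q := by simpa [pt1, E24] using h
lemma pt2_inj {p q : Fin 8} (h : pt2 p = pt2 q) : p = q := by simpa [pt2, E24] using h
lemma pt0_ne_pt1 (p q : Fin 8) : pt0 p ≠ pt1 q := by simp [pt0, pt1, E24]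
lemma pt0_ne_pt2 (p q : Fin 8) : pt0 p ≠ pt2 q := by simp [pt0, pt2, E24]
lemma pt1_ne_pt2 (p q : Fin 8) : pt1 p ≠ pt2 q := by simp [pt1, pt2, E24]
lemma pt_surj (x : Fin 24) : (∃ p, x = pt0 p) ∨ (∃ p, x = pt1 p) ∨ (∃ p, x = pt2 p) := by
  rcases h : E24.symm x with (p | p) | p
  · exact Or.inl ⟨p, by rw [pt0, ← h, Equiv.apply_symm_apply]⟩
  · exact Or.inr (Or.inl ⟨p, by rw [pt1, ← h, Equiv.apply_symm_apply]⟩)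
  · exact Or.inr (Or.inr ⟨p, by rw [pt2, ← h, Equiv.apply_symm_apply]⟩)

noncomputable def sw : Perm (Fin 24) :=
  Equiv.permCongr F12 (Equiv.sumComm (Fin 12) (Fin 12))
lemma sw_eL (i : Fin 12) : sw (eL i) = eR i := by simp [sw, eL, eR, Equiv.permCongr_apply]
lemma sw_eR (i : Fin 12) : sw (eR i) = eL i := by simp [sw, eL, eR, Equiv.permCongr_apply]
lemma sw_ne (x : Fin 24) : sw x ≠ x := by
  rcases eLR_surj x with ⟨i, rfl⟩ | ⟨i, rfl⟩
  · rw [sw_eL]; exact (eL_ne_eR i i).symm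
  · rw [sw_eR]; exact eL_ne_eR i i
lemma sw_sw (x : Fin 24) : sw (sw x) = x := by
  rcases eLR_surj x with ⟨i, rfl⟩ | ⟨i, rfl⟩ <;> simp [sw_eL, sw_eR]

lemma exists_third (p q : Fin 8) : ∃ k, k ≠ p ∧ k ≠ q := by revert p q; decide

lemma twelve_not_into_eight (f : Fin 12 → Fin 24) (hf : Function.Injective f)
    (g : Fin 8 → Fin 24) (h : ∀ i, ∃ p, f i = g p) : False := by
  choose φ hφ using h
  have hinj : Function.Injective φ := by
    intro a b hab
    apply hf
    rw [hφ a, hφ b, hab]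
  have := Fintype.card_le_of_injective φ hinj
  simp at this

lemma exists_perm_two {α : Type*} [DecidableEq α] {i j i' j' : α}
    (hij : i ≠ j) (hij' : i' ≠ j') :
    ∃ σ : Equiv.Perm α, σ i = i' ∧ σ j = j' := by
  refine ⟨Equiv.swap (Equiv.swap i i' j) j' * Equiv.swap i i', ?_, ?_⟩
  · have h1 : Equiv.swap i i' j ≠ i' := by
      intro h
      exact hij ((Equiv.swap i i').injective (h.trans (Equiv.swap_apply_left i i').symm)).symm
    simp only [Equiv.Perm.mul_apply, Equiv.swap_apply_left]
    exact Equiv.swap_apply_of_ne_of_ne h1.symm hij'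
  · simp only [Equiv.Perm.mul_apply, Equiv.swap_apply_right, Equiv.swap_apply_left]

theorem stmt_7 (G : Subgroup (Equiv.Perm (Fin 24)))
    (htrans : ∀ x y : Fin 24, ∃ g ∈ G, g x = y)
    (hf : ∀ σ : Equiv.Perm (Fin 12), fEmb σ ∈ G)
    (hg : ∃ c : Equiv.Perm (Fin 24), ∀ σ : Equiv.Perm (Fin 8), c * gEmb σ * c⁻¹ ∈ G) :
    ∀ r : Fin 24 → Fin 24 → Prop, Equivalence r →
      (∀ g ∈ G, ∀ x y : Fin 24, r x y → r (g x) (g y)) →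
      (∀ x y : Fin 24, r x y → x = y) ∨ (∀ x y : Fin 24, r x y) := by
  intro r heq hinv
  have orbLL : ∀ {i j i' j' : Fin 12}, i ≠ j → i' ≠ j' →
      r (eL i) (eL j) → r (eL i') (eL j') := by
    intro i j i' j' hij hij' h
    obtain ⟨σ, h1, h2⟩ := exists_perm_two hij hij'
    have := hinv _ (hf σ) _ _ h
    rwa [fEmb_eL, fEmb_eL, h1, h2] at this
  have orbRR : ∀ {i j i' j' : Fin 12}, i ≠ j → i' ≠ j' →
      r (eR i) (eR j) → r (eR i') (eR j') := by
    intro i j i' j' hij hij' h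
    obtain ⟨σ, h1, h2⟩ := exists_perm_two hij hij'
    have := hinv _ (hf σ) _ _ h
    rwa [fEmb_eR, fEmb_eR, h1, h2] at this
  have orbLR : ∀ {i j i' j' : Fin 12}, i ≠ j → i' ≠ j' →
      r (eL i) (eR j) → r (eL i') (eR j') := by
    intro i j i' j' hij hij' h
    obtain ⟨σ, h1, h2⟩ := exists_perm_two hij hij'
    have := hinv _ (hf σ) _ _ h
    rwa [fEmb_eL, fEmb_eR, h1, h2] at this
  have orbD : ∀ {i i' : Fin 12}, r (eL i) (eR i) → r (eL i') (eR i') := by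
    intro i i' h
    have := hinv _ (hf (Equiv.swap i i')) _ _ h
    rwa [fEmb_eL, fEmb_eR, Equiv.swap_apply_left] at this
  by_cases hc : r (eL 0) (eR 1)
  · right
    have hz1 : (0 : Fin 12) ≠ 1 := by decide
    have hcAll : ∀ i j : Fin 12, i ≠ j → r (eL i) (eR j) :=
      fun i j h => orbLR hz1 h hc
    have ha : r (eL 0) (eL 1) := by
      have h1 : r (eL 0) (eR 2) := hcAll 0 2 (by decide)
      have h2 : r (eL 1) (eR 2) := hcAll 1 2 (by decide)
      exact orbLL (i := 0) (j := 1) hz1 hz1 (heq.trans h1 (heq.symm h2))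
    have haAll : ∀ i j : Fin 12, i ≠ j → r (eL i) (eL j) :=
      fun i j h => orbLL hz1 h ha
    have ha' : r (eR 0) (eR 1) := by
      have h1 : r (eL 2) (eR 0) := hcAll 2 0 (by decide)
      have h2 : r (eL 2) (eR 1) := hcAll 2 1 (by decide)
      exact heq.trans (heq.symm h1) h2
    have haAll' : ∀ i j : Fin 12, i ≠ j → r (eR i) (eR j) :=
      fun i j h => orbRR hz1 h ha'
    have hb : r (eL 0) (eR 0) := heq.trans hc (haAll' 1 0 (by decide))
    have hbAll : ∀ i : Fin 12, r (eL i) (eR i) := fun i => orbD hb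
    intro x y
    rcases eLR_surj x with ⟨i, rfl⟩ | ⟨i, rfl⟩ <;>
      rcases eLR_surj y with ⟨j, rfl⟩ | ⟨j, rfl⟩
    · by_cases h : i = j
      · exact h ▸ heq.refl _
      · exact haAll i j h
    · by_cases h : i = j
      · exact h ▸ hbAll i
      · exact hcAll i j h
    · by_cases h : i = j
      · exact heq.symm (h ▸ hbAll j)
      · exact heq.symm (hcAll j i (Ne.symm h))
    · by_cases h : i = j
      · exact h ▸ heq.refl _
      · exact haAll' i j h
  · have hz1 : (0 : Fin 12) ≠ 1 := by decide
    have hcN : ∀ i j : Fin 12, i ≠ j → ¬ r (eL i) (eR j) :=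
      fun i j h hr => hc (orbLR h hz1 hr)
    obtain ⟨cj, hcj⟩ := hg
    by_cases hbb : r (eL 0) (eR 0)
    · -- pairs case: derive False
      exfalso
      have hbAll : ∀ i : Fin 12, r (eL i) (eR i) := fun i => orbD hbb
      have haN : ∀ i j : Fin 12, i ≠ j → ¬ r (eL i) (eL j) := by
        intro i j h hr
        exact hcN i j h (heq.trans hr (hbAll j))
      have haN' : ∀ i j : Fin 12, i ≠ j → ¬ r (eR i) (eR j) := by
        intro i j h hr
        exact hcN i j h (heq.trans (hbAll i) hr)
      have hchar : ∀ z w, r z w ↔ (z = w ∨ w = sw z) := by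
        intro z w
        constructor
        · intro h
          rcases eLR_surj z with ⟨i, rfl⟩ | ⟨i, rfl⟩ <;>
            rcases eLR_surj w with ⟨j, rfl⟩ | ⟨j, rfl⟩
          · by_cases hij : i = j
            · exact Or.inl (hij ▸ rfl)
            · exact absurd h (haN i j hij)
          · by_cases hij : i = j
            · exact Or.inr (by rw [sw_eL, hij])
            · exact absurd h (hcN i j hij)
          · by_cases hij : i = j
            · exact Or.inr (by rw [sw_eR, hij])
            · exact absurd (heq.symm h) (hcN j i (Ne.symm hij))
          · by_cases hij : i = j
            · exact Or.inl (hij ▸ rfl)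
            · exact absurd h (haN' i j hij)
        · rintro (rfl | rfl)
          · exact heq.refl _
          · rcases eLR_surj z with ⟨i, rfl⟩ | ⟨i, rfl⟩
            · rw [sw_eL]; exact hbAll i
            · rw [sw_eR]; exact heq.symm (hbAll i)
      set M : Fin 24 → Fin 24 := fun x => cj⁻¹ (sw (cj x)) with hM
      have hM_ne : ∀ x, M x ≠ x := by
        intro x h
        apply sw_ne (cj x)
        have : cj (cj⁻¹ (sw (cj x))) = cj x := congrArg cj h
        rwa [perm_apply_inv_self'] at this
      have hMM : ∀ x, M (M x) = x := by
        intro x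
        simp [hM, perm_apply_inv_self', sw_sw]
      have hMcomm : ∀ (σ : Perm (Fin 8)) x, gEmb σ (M x) = M (gEmb σ x) := by
        intro σ x
        have h1 : r (cj x) (sw (cj x)) := (hchar _ _).2 (Or.inr rfl)
        have h2 := hinv _ (hcj σ) _ _ h1
        simp only [Equiv.Perm.mul_apply, perm_inv_apply_self'] at h2
        have hx : cj⁻¹ (sw (cj x)) = M x := rfl
        rw [hx] at h2
        rcases (hchar _ _).1 h2 with h3 | h3
        · exact absurd ((gEmb σ).injective (cj.injective h3)).symm (hM_ne x)
        · have : cj (gEmb σ (M x)) = cj (M (gEmb σ x)) := by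
            rw [h3, hM]
            simp [perm_apply_inv_self']
          exact cj.injective this
      have key : ∀ (u v : Fin 8 → Fin 24),
          (∀ σ p, gEmb σ (u p) = u (σ p)) → (∀ σ p, gEmb σ (v p) = v (σ p)) →
          (∀ a b, v a = v b → a = b) →
          ∀ p q, M (u p) = v q → q = p := by
        intro u v hu hv hvinj p q hMq
        by_contra hne
        obtain ⟨k, hk1, hk2⟩ := exists_third p q
        set σ := Equiv.swap q k with hσ
        have hσp : σ p = p :=
          Equiv.swap_apply_of_ne_of_ne (fun h => hne h.symm) (fun h => hk1 h.symm)
        have h1 : gEmb σ (u p) = u p := by rw [hu, hσp]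
        have h2 : M (u p) = gEmb σ (M (u p)) := by
          conv_lhs => rw [← h1]
          rw [← hMcomm]
        rw [hMq, hv] at h2
        have : q = σ q := hvinj _ _ h2
        rw [hσ, Equiv.swap_apply_left] at this
        exact hk2 this.symm
      rcases pt_surj (M (pt0 0)) with ⟨p, hp⟩ | ⟨p, hp⟩ | ⟨p, hp⟩
      · have : p = 0 := key pt0 pt0 gEmb_pt0 gEmb_pt0 (fun _ _ h => pt0_inj h) 0 p hp
        exact hM_ne (pt0 0) (by rw [hp, this])
      · have hp0 : p = 0 := key pt0 pt1 gEmb_pt0 gEmb_pt1 (fun _ _ h => pt1_inj h) 0 p hp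
        subst hp0
        have h10 : M (pt1 0) = pt0 0 := by rw [← hp, hMM]
        rcases pt_surj (M (pt2 0)) with ⟨q, hq⟩ | ⟨q, hq⟩ | ⟨q, hq⟩
        · have hq0 : q = 0 := key pt2 pt0 gEmb_pt2 gEmb_pt0 (fun _ _ h => pt0_inj h) 0 q hq
          subst hq0
          have : M (pt0 0) = pt2 0 := by rw [← hq, hMM]
          rw [hp] at this
          exact pt1_ne_pt2 0 0 this
        · have hq0 : q = 0 := key pt2 pt1 gEmb_pt2 gEmb_pt1 (fun _ _ h => pt1_inj h) 0 q hq
          subst hq0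
          have : M (pt1 0) = pt2 0 := by rw [← hq, hMM]
          rw [h10] at this
          exact pt0_ne_pt2 0 0 this
        · have hq0 : q = 0 := key pt2 pt2 gEmb_pt2 gEmb_pt2 (fun _ _ h => pt2_inj h) 0 q hq
          exact hM_ne (pt2 0) (by rw [hq, hq0])
      · have hp0 : p = 0 := key pt0 pt2 gEmb_pt0 gEmb_pt2 (fun _ _ h => pt2_inj h) 0 p hp
        subst hp0
        have h20 : M (pt2 0) = pt0 0 := by rw [← hp, hMM]
        rcases pt_surj (M (pt1 0)) with ⟨q, hq⟩ | ⟨q, hq⟩ | ⟨q, hq⟩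
        · have hq0 : q = 0 := key pt1 pt0 gEmb_pt1 gEmb_pt0 (fun _ _ h => pt0_inj h) 0 q hq
          subst hq0
          have : M (pt0 0) = pt1 0 := by rw [← hq, hMM]
          rw [hp] at this
          exact (pt1_ne_pt2 0 0 this.symm)
        · have hq0 : q = 0 := key pt1 pt1 gEmb_pt1 gEmb_pt1 (fun _ _ h => pt1_inj h) 0 q hq
          exact hM_ne (pt1 0) (by rw [hq, hq0])
        · have hq0 : q = 0 := key pt1 pt2 gEmb_pt1 gEmb_pt2 (fun _ _ h => pt2_inj h) 0 q hq
          subst hq0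
          have : M (pt2 0) = pt1 0 := by rw [← hq, hMM]
          rw [h20] at this
          exact pt0_ne_pt1 0 0 this
    · have hbN : ∀ i : Fin 12, ¬ r (eL i) (eR i) := fun i h => hbb (orbD h)
      by_cases ha : r (eL 0) (eL 1)
      · -- halves case : derive False
        exfalso
        have haAll : ∀ i j : Fin 12, i ≠ j → r (eL i) (eL j) :=
          fun i j h => orbLL hz1 h ha
        obtain ⟨g0, hg0G, hg0⟩ := htrans (eL 0) (eR 0)
        have h1 : r (eR 0) (g0 (eL 1)) := by
          have := hinv g0 hg0G _ _ ha
          rwa [hg0] at this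
        have haAll' : ∀ i j : Fin 12, i ≠ j → r (eR i) (eR j) := by
          have ha' : r (eR 0) (eR 1) := by
            rcases eLR_surj (g0 (eL 1)) with ⟨j, hj⟩ | ⟨j, hj⟩
            · rw [hj] at h1
              exfalso
              by_cases hj0 : j = 0
              · exact hbN 0 (heq.symm (hj0 ▸ h1))
              · exact hcN j 0 hj0 (heq.symm h1)
            · rw [hj] at h1
              have hj0 : j ≠ 0 := by
                intro h
                subst h
                rw [← hg0] at hj
                exact hz1 (eL_inj (g0.injective hj.symm))
              exact orbRR (Ne.symm hj0) hz1 h1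
          exact fun i j h => orbRR hz1 h ha'
        set P : Fin 24 → Prop := fun x => ∃ i, cj x = eL i with hP
        have hhalf : ∀ z w, r z w ↔ ((∃ i, z = eL i) ↔ (∃ i, w = eL i)) := by
          intro z w
          constructor
          · intro h
            rcases eLR_surj z with ⟨i, rfl⟩ | ⟨i, rfl⟩ <;>
              rcases eLR_surj w with ⟨j, rfl⟩ | ⟨j, rfl⟩
            · exact iff_of_true ⟨i, rfl⟩ ⟨j, rfl⟩
            · exfalso
              by_cases hij : i = j
              · exact hbN i (hij ▸ h)
              · exact hcN i j hij h
            · exfalso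
              by_cases hij : i = j
              · exact hbN j (heq.symm (hij ▸ h))
              · exact hcN j i (Ne.symm hij) (heq.symm h)
            · exact iff_of_false (fun ⟨k, hk⟩ => eL_ne_eR k i hk.symm)
                (fun ⟨k, hk⟩ => eL_ne_eR k j hk.symm)
          · intro h
            rcases eLR_surj z with ⟨i, rfl⟩ | ⟨i, rfl⟩ <;>
              rcases eLR_surj w with ⟨j, rfl⟩ | ⟨j, rfl⟩
            · by_cases hij : i = j
              · exact hij ▸ heq.refl _
              · exact haAll i j hij
            · exact absurd (h.1 ⟨i, rfl⟩) (fun ⟨k, hk⟩ => eL_ne_eR k j hk.symm)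
            · exact absurd (h.2 ⟨j, rfl⟩) (fun ⟨k, hk⟩ => eL_ne_eR k i hk.symm)
            · by_cases hij : i = j
              · exact hij ▸ heq.refl _
              · exact haAll' i j hij
        have hQ : ∀ (σ : Perm (Fin 8)) x y, (P x ↔ P y) → (P (gEmb σ x) ↔ P (gEmb σ y)) := by
          intro σ x y hxy
          have h1 : r (cj x) (cj y) := (hhalf _ _).2 hxy
          have h2 := hinv _ (hcj σ) _ _ h1
          simp only [Equiv.Perm.mul_apply, perm_inv_apply_self'] at h2
          exact (hhalf _ _).1 h2
        have hnofix : ∀ (σ : Perm (Fin 8)) x₀, (∀ x, gEmb σ (gEmb σ x) = x) →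
            P x₀ → ¬ P (gEmb σ x₀) → ∀ u, gEmb σ u ≠ u := by
          intro σ x₀ hinv2 hPx hnP u hu
          by_cases hPu : P u
          · have h3 := hQ σ x₀ u (iff_of_true hPx hPu)
            rw [hu] at h3
            exact hnP (h3.2 hPu)
          · have h3 := hQ σ (gEmb σ x₀) u (iff_of_false hnP hPu)
            rw [hinv2 x₀, hu] at h3
            exact hPu (h3.1 hPx)
        have hswap2 : ∀ (σ : Perm (Fin 8)), (∀ k, σ (σ k) = k) →
            ∀ x, gEmb σ (gEmb σ x) = x := by
          intro σ hσ x
          rcases pt_surj x with ⟨p, rfl⟩ | ⟨p, rfl⟩ | ⟨p, rfl⟩ <;>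
            simp [gEmb_pt0, gEmb_pt1, gEmb_pt2, hσ]
        by_cases hnc : (∃ p q, P (pt0 p) ∧ ¬ P (pt0 q)) ∨ (∃ p q, P (pt1 p) ∧ ¬ P (pt1 q)) ∨
            (∃ p q, P (pt2 p) ∧ ¬ P (pt2 q))
        · have main : ∀ (u : Fin 8 → Fin 24), (∀ σ p, gEmb σ (u p) = u (σ p)) →
              ∀ p q, P (u p) → ¬ P (u q) → False := by
            intro u hu p q hPp hPq
            have hpq : p ≠ q := fun h => hPq (h ▸ hPp)
            set σ := Equiv.swap p q with hσ
            have h1 : gEmb σ (u p) = u q := by rw [hu, hσ, Equiv.swap_apply_left]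
            have hnf := hnofix σ (u p) (hswap2 σ (fun k => Equiv.swap_apply_self p q k))
              hPp (h1 ▸ hPq)
            obtain ⟨k, hk1, hk2⟩ := exists_third p q
            apply hnf (pt0 k)
            rw [gEmb_pt0, hσ, Equiv.swap_apply_of_ne_of_ne hk1 hk2]
          rcases hnc with ⟨p, q, h1, h2⟩ | ⟨p, q, h1, h2⟩ | ⟨p, q, h1, h2⟩
          exacts [main pt0 gEmb_pt0 p q h1 h2, main pt1 gEmb_pt1 p q h1 h2,
            main pt2 gEmb_pt2 p q h1 h2]
        · push_neg at hnc
          obtain ⟨hc0, hc1, hc2⟩ := hnc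
          have hPeL : ∀ i : Fin 12, P (cj⁻¹ (eL i)) := by
            intro i
            exact ⟨i, by simp [perm_apply_inv_self']⟩
          have hPeR : ∀ i : Fin 12, ¬ P (cj⁻¹ (eR i)) := by
            rintro i ⟨j, hj⟩
            rw [perm_apply_inv_self'] at hj
            exact eL_ne_eR j i hj.symm
          have hinjL : Function.Injective (fun i : Fin 12 => cj⁻¹ (eL i)) := by
            intro a b hab
            exact eL_inj ((cj⁻¹ : Perm (Fin 24)).injective hab)
          have hinjR : Function.Injective (fun i : Fin 12 => cj⁻¹ (eR i)) := by
            intro a b hab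
            exact eR_inj ((cj⁻¹ : Perm (Fin 24)).injective hab)
          by_cases t0 : P (pt0 0) <;> by_cases t1 : P (pt1 0) <;> by_cases t2 : P (pt2 0)
          · -- TTT
            apply hPeR 0
            rcases pt_surj (cj⁻¹ (eR 0)) with ⟨p, hp⟩ | ⟨p, hp⟩ | ⟨p, hp⟩
            · exact hp ▸ hc0 0 p t0
            · exact hp ▸ hc1 0 p t1
            · exact hp ▸ hc2 0 p t2
          · -- TTF : eR into pt2
            apply twelve_not_into_eight _ hinjR pt2
            intro i
            rcases pt_surj (cj⁻¹ (eR i)) with ⟨p, hp⟩ | ⟨p, hp⟩ | ⟨p, hp⟩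
            · exact absurd (hp ▸ hc0 0 p t0) (hPeR i)
            · exact absurd (hp ▸ hc1 0 p t1) (hPeR i)
            · exact ⟨p, hp⟩
          · -- TFT : eR into pt1
            apply twelve_not_into_eight _ hinjR pt1
            intro i
            rcases pt_surj (cj⁻¹ (eR i)) with ⟨p, hp⟩ | ⟨p, hp⟩ | ⟨p, hp⟩
            · exact absurd (hp ▸ hc0 0 p t0) (hPeR i)
            · exact ⟨p, hp⟩
            · exact absurd (hp ▸ hc2 0 p t2) (hPeR i)
          · -- TFF : eL into pt0
            apply twelve_not_into_eight _ hinjL pt0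
            intro i
            rcases pt_surj (cj⁻¹ (eL i)) with ⟨p, hp⟩ | ⟨p, hp⟩ | ⟨p, hp⟩
            · exact ⟨p, hp⟩
            · exact absurd (hp ▸ hPeL i) (fun h => t1 (hc1 p 0 h))
            · exact absurd (hp ▸ hPeL i) (fun h => t2 (hc2 p 0 h))
          · -- FTT : eR into pt0
            apply twelve_not_into_eight _ hinjR pt0
            intro i
            rcases pt_surj (cj⁻¹ (eR i)) with ⟨p, hp⟩ | ⟨p, hp⟩ | ⟨p, hp⟩
            · exact ⟨p, hp⟩
            · exact absurd (hp ▸ hc1 0 p t1) (hPeR i)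
            · exact absurd (hp ▸ hc2 0 p t2) (hPeR i)
          · -- FTF : eL into pt1
            apply twelve_not_into_eight _ hinjL pt1
            intro i
            rcases pt_surj (cj⁻¹ (eL i)) with ⟨p, hp⟩ | ⟨p, hp⟩ | ⟨p, hp⟩
            · exact absurd (hp ▸ hPeL i) (fun h => t0 (hc0 p 0 h))
            · exact ⟨p, hp⟩
            · exact absurd (hp ▸ hPeL i) (fun h => t2 (hc2 p 0 h))
          · -- FFT : eL into pt2
            apply twelve_not_into_eight _ hinjL pt2
            intro i
            rcases pt_surj (cj⁻¹ (eL i)) with ⟨p, hp⟩ | ⟨p, hp⟩ | ⟨p, hp⟩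
            · exact absurd (hp ▸ hPeL i) (fun h => t0 (hc0 p 0 h))
            · exact absurd (hp ▸ hPeL i) (fun h => t1 (hc1 p 0 h))
            · exact ⟨p, hp⟩
          · -- FFF
            apply t0
            rcases pt_surj (cj⁻¹ (eL 0)) with ⟨p, hp⟩ | ⟨p, hp⟩ | ⟨p, hp⟩
            · exact hc0 p 0 (hp ▸ hPeL 0)
            · exact absurd (hp ▸ hPeL 0) (fun h => t1 (hc1 p 0 h))
            · exact absurd (hp ▸ hPeL 0) (fun h => t2 (hc2 p 0 h))
      · -- singleton case
        have haN : ∀ i j : Fin 12, i ≠ j → ¬ r (eL i) (eL j) :=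
          fun i j h hr => ha (orbLL h hz1 hr)
        have haN' : ∀ i j : Fin 12, i ≠ j → ¬ r (eR i) (eR j) := by
          intro i j hij hr
          have hr01 : r (eR 0) (eR 1) := orbRR hij hz1 hr
          obtain ⟨g0, hg0G, hg0⟩ := htrans (eR 0) (eL 0)
          have h1 : r (eL 0) (g0 (eR 1)) := by
            have := hinv g0 hg0G _ _ hr01
            rwa [hg0] at this
          rcases eLR_surj (g0 (eR 1)) with ⟨j', hj⟩ | ⟨j', hj⟩
          · rw [hj] at h1
            have hj0 : j' ≠ 0 := by
              intro h
              subst h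
              rw [← hg0] at hj
              exact hz1 (eR_inj (g0.injective hj.symm))
            exact haN 0 j' (Ne.symm hj0) h1
          · rw [hj] at h1
            by_cases hj0 : j' = 0
            · exact hbN 0 (hj0 ▸ h1)
            · exact hcN 0 j' (Ne.symm hj0) h1
        left
        intro x y hxy
        rcases eLR_surj x with ⟨i, rfl⟩ | ⟨i, rfl⟩ <;>
          rcases eLR_surj y with ⟨j, rfl⟩ | ⟨j, rfl⟩
        · by_cases h : i = j
          · exact h ▸ rfl
          · exact absurd hxy (haN i j h)
        · exfalso
          by_cases h : i = j
          · exact hbN i (h ▸ hxy)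
          · exact hcN i j h hxy
        · exfalso
          by_cases h : i = j
          · exact hbN j (heq.symm (h ▸ hxy))
          · exact hcN j i (Ne.symm h) (heq.symm hxy)
        · by_cases h : i = j
          · exact h ▸ rfl
          · exact absurd hxy (haN' i j h)
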